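/- Let S′ be the n×n lower triangular matrix with all entries on and below the main diagonal equal to 1. Then ‖S′‖ = 1/(2 sin(π/(4n+2))), and in particular ‖S′‖ ≤ n + 1/2. -/

import Mathlib

open Real Finset

namespace OpNormAux

noncomputable def phi (m : ℕ) : ℝ := π / (2 * (m+1) + 1)
noncomputable def v (m : ℕ) (i : ℕ) : ℝ := Real.sin ((i + 1) * phi m)
noncomputable def lam (m : ℕ) : ℝ := 4 * Real.sin (phi m / 2) ^ 2

lemma phi_pos (m : ℕ) : 0 < phi m := by
  unfold phi; positivity

lemma phi_lt (m : ℕ) : ((m:ℝ)+1) * phi m < π := by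
  unfold phi
  rw [div_eq_mul_inv, ← mul_assoc, mul_comm ((m:ℝ)+1) π, mul_assoc]
  nth_rewrite 2 [← mul_one π]
  apply mul_lt_mul_of_pos_left _ pi_pos
  rw [mul_inv_lt_iff₀ (by positivity), one_mul]
  linarith

lemma lam_eq (m : ℕ) : lam m = 2 - 2 * Real.cos (phi m) := by
  unfold lam
  rw [sin_sq_eq_half_sub]
  rw [show 2 * (phi m / 2) = phi m by ring]
  ring

lemma v_pos (m : ℕ) {i : ℕ} (hi : i < m + 1) : 0 < v m i := by
  unfold v
  have h1 : ((i:ℝ)+1) * phi m ≤ ((m:ℝ)+1) * phi m := by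
    apply mul_le_mul_of_nonneg_right _ (phi_pos m).le
    have : (i:ℝ) ≤ m := by exact_mod_cast Nat.lt_succ_iff.mp hi
    linarith
  exact sin_pos_of_pos_of_lt_pi (mul_pos (by positivity) (phi_pos m)) (lt_of_le_of_lt h1 (phi_lt m))

lemma v_rec (m i : ℕ) : (2 - lam m) * v m (i+1) = v m i + v m (i+2) := by
  rw [lam_eq]; unfold v
  have h1 : ((i:ℝ) + 1 + 1) * phi m + phi m = ((i:ℝ)+2+1) * phi m := by ring
  have h2 : ((i:ℝ) + 1 + 1) * phi m - phi m = ((i:ℝ)+1) * phi m := by ring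
  push_cast
  rw [← h1, ← h2, Real.sin_add, Real.sin_sub]
  ring

lemma v_base (m : ℕ) : (2 - lam m) * v m 0 = v m 1 := by
  rw [lam_eq]; unfold v
  push_cast
  rw [show ((1:ℝ)+1) * phi m = 2 * phi m by ring, Real.sin_two_mul]
  ring

lemma v_top (m : ℕ) : v m (m+1) = v m m := by
  unfold v
  have h : ((m:ℝ)+1+1) * phi m = π - ((m:ℝ)+1) * phi m := by
    unfold phi
    field_simp
    ring
  push_cast
  rw [h, Real.sin_pi_sub]


lemma term_eq (m i : ℕ) (hi : i < m) (y : ℕ → ℝ) :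
    (v m (i+1) * y i - v m i * y (i+1))^2 / (v m i * v m (i+1))
      = ((y (i+1) - y i)^2 - lam m * (y (i+1))^2)
        + ((v m (i+1) / v m i - 1) * (y i)^2 - (v m (i+2) / v m (i+1) - 1) * (y (i+1))^2) := by
  have hvi : 0 < v m i := v_pos m (by omega)
  have hvi1 : 0 < v m (i+1) := v_pos m (by omega)
  have hrec := v_rec m i
  field_simp
  linear_combination (-(v m i * y (i+1)^2)) * hrec

lemma key (m : ℕ) (y : ℕ → ℝ) :
    (y 0)^2 + ∑ i ∈ range m, (y (i+1) - y i)^2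
        - lam (m) * ∑ i ∈ range (m+1), (y i)^2
    = ∑ i ∈ range m, (v m (i+1) * y i - v m i * y (i+1))^2 / (v m i * v m (i+1)) := by
  have hsum : ∑ i ∈ range m, (v m (i+1) * y i - v m i * y (i+1))^2 / (v m i * v m (i+1))
      = (∑ i ∈ range m, ((y (i+1) - y i)^2 - lam m * (y (i+1))^2))
        + ∑ i ∈ range m, ((v m (i+1) / v m i - 1) * (y i)^2
            - (v m (i+2) / v m (i+1) - 1) * (y (i+1))^2) := by
    rw [← Finset.sum_add_distrib]
    exact Finset.sum_congr rfl fun i hi => term_eq m i (Finset.mem_range.mp hi) y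
  rw [hsum, Finset.sum_range_sub' (fun i => (v m (i+1) / v m i - 1) * (y i)^2) m]
  have h0 : v m 1 / v m 0 - 1 = 1 - lam m := by
    have := v_base m
    have hv0 : 0 < v m 0 := v_pos m (by omega)
    field_simp
    linarith [v_base m]
  have hm : v m (m+1) / v m m - 1 = 0 := by
    rw [v_top m, div_self (v_pos m (by omega)).ne']
    ring
  rw [h0, hm, Finset.sum_sub_distrib]
  have hshift : ∑ i ∈ range m, lam m * (y (i+1))^2
      = lam m * ∑ i ∈ range (m+1), (y i)^2 - lam m * (y 0)^2 := by
    rw [Finset.sum_range_succ' (fun i => (y i)^2) m, mul_add, ← Finset.mul_sum]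
    ring
  rw [hshift]
  ring


def ext (m : ℕ) (u : Fin (m+1) → ℝ) : ℕ → ℝ := fun j => if h : j < m+1 then u ⟨j,h⟩ else 0

lemma mulVec_eq (m : ℕ) (S : Matrix (Fin (m+1)) (Fin (m+1)) ℝ)
    (hS : S = Matrix.of fun i j : Fin (m+1) => if j ≤ i then (1 : ℝ) else 0)
    (u : Fin (m+1) → ℝ) (i : Fin (m+1)) :
    S.mulVec u i = ∑ j ∈ range ((i:ℕ)+1), ext m u j := by
  subst hS
  rw [Matrix.mulVec, dotProduct]
  have h1 : ∀ j : Fin (m+1),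
      (Matrix.of fun i j : Fin (m+1) => if j ≤ i then (1:ℝ) else 0) i j * u j
      = (fun k : ℕ => if k < (i:ℕ)+1 then ext m u k else 0) (j:ℕ) := by
    intro j
    simp only [Matrix.of_apply, ext, dif_pos j.isLt, Fin.eta]
    by_cases h : j ≤ i
    · rw [if_pos h, if_pos (Nat.lt_succ_of_le h), one_mul]
    · rw [if_neg h, if_neg (fun hc => h (Fin.le_def.mpr (Nat.lt_succ_iff.mp hc))), zero_mul]
  rw [Finset.sum_congr rfl (fun j _ => h1 j)]
  rw [Fin.sum_univ_eq_sum_range (fun k : ℕ => if k < (i:ℕ)+1 then ext m u k else 0) (m+1)]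
  rw [← Finset.sum_subset (Finset.range_subset_range.mpr (Nat.succ_le_of_lt i.isLt))
      (fun k _ hk => if_neg (by simpa using hk))]
  exact Finset.sum_congr rfl fun k hk => if_pos (Finset.mem_range.mp hk)

lemma norm_sq_eq (m : ℕ) (x : EuclideanSpace ℝ (Fin (m+1))) :
    ‖x‖^2 = ∑ j ∈ range (m+1), (ext m (fun i => x i) j)^2 := by
  rw [EuclideanSpace.norm_eq, Real.sq_sqrt (by positivity)]
  rw [← Fin.sum_univ_eq_sum_range (fun j => (ext m (fun i => x i) j)^2) (m+1)]
  refine Finset.sum_congr rfl fun j _ => ?_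
  simp [ext, dif_pos j.isLt, Real.norm_eq_abs, sq_abs]
  intro h; have := j.isLt; omega

lemma phi_le_pi (m : ℕ) : phi m ≤ π := by
  unfold phi
  apply div_le_self pi_pos.le
  push_cast
  linarith [Nat.cast_nonneg (α := ℝ) m]

lemma jordan (m : ℕ) : 1 / (2 * ((m:ℝ)+1) + 1) ≤ Real.sin (phi m / 2) := by
  have hjordan := Real.mul_le_sin (x := phi m / 2)
    (by linarith [phi_pos m]) (by linarith [phi_le_pi m])
  have he : 2 / π * (phi m / 2) = 1 / (2 * ((m:ℝ)+1) + 1) := by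
    unfold phi
    push_cast
    rw [div_div]
    field_simp
  rw [← he]
  exact hjordan

end OpNormAux

set_option maxHeartbeats 2000000 in
open OpNormAux in
theorem opNorm_lower_triangular_ones (n : ℕ) (hn : 0 < n)
    (S : Matrix (Fin n) (Fin n) ℝ)
    (hS : S = Matrix.of fun i j : Fin n => if j ≤ i then (1 : ℝ) else 0) :
    ‖Matrix.toEuclideanCLM (𝕜 := ℝ) S‖ = 1 / (2 * Real.sin (π / (4 * n + 2))) ∧
      ‖Matrix.toEuclideanCLM (𝕜 := ℝ) S‖ ≤ n + 1 / 2 := by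
  obtain ⟨m, rfl⟩ : ∃ m, n = m + 1 := ⟨n - 1, (Nat.succ_pred_eq_of_pos hn).symm⟩
  set T := Matrix.toEuclideanCLM (𝕜 := ℝ) S with hT
  have hθ : π / (4 * ((m:ℕ)+1 : ℕ) + 2 : ℝ) = phi m / 2 := by
    unfold phi; push_cast; rw [div_div]; congr 1; ring
  have hsθ : 0 < Real.sin (phi m / 2) := by
    apply Real.sin_pos_of_pos_of_lt_pi
    · have := phi_pos m; linarith
    · have h1 : phi m ≤ π := by
        unfold phi
        rw [div_le_iff₀ (by positivity)]
        nlinarith [pi_pos]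
      linarith [pi_pos]
  have hlam : lam m = (2 * Real.sin (phi m / 2))^2 := by unfold lam; ring
  have hlam_pos : 0 < lam m := by rw [hlam]; positivity
  set c : ℝ := 1 / (2 * Real.sin (phi m / 2)) with hc
  have hc_pos : 0 < c := by positivity
  have hc_sq : c^2 * lam m = 1 := by
    rw [hlam, hc]
    field_simp
  -- apply formula
  have hTx : ∀ (x : EuclideanSpace ℝ (Fin (m+1))) (i : Fin (m+1)),
      T x i = ∑ j ∈ Finset.range ((i:ℕ)+1), ext m (fun k => x k) j := by
    intro x i
    have h1 : (WithLp.equiv 2 _) (T x) = Matrix.toLin' S ((WithLp.equiv 2 ((Fin (m+1)) → ℝ)) x) :=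
      Matrix.ofLp_toEuclideanCLM S x
    have h2 : T x i = S.mulVec (fun k => x k) i := by
      rw [show T x i = ((WithLp.equiv 2 _) (T x)) i from rfl, h1, Matrix.toLin'_apply]
      rfl
    rw [h2, mulVec_eq m S hS]
  -- partial sums
  set Y : EuclideanSpace ℝ (Fin (m+1)) → ℕ → ℝ :=
    fun x k => ∑ j ∈ Finset.range (k+1), ext m (fun i => x i) j with hY
  have hTnorm : ∀ x : EuclideanSpace ℝ (Fin (m+1)),
      ‖T x‖^2 = ∑ i ∈ Finset.range (m+1), (Y x i)^2 := by
    intro x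
    rw [norm_sq_eq m (T x)]
    refine Finset.sum_congr rfl fun j hj => ?_
    have hjm : j < m + 1 := Finset.mem_range.mp hj
    rw [show ext m (fun i => (T x) i) j = T x ⟨j, hjm⟩ from dif_pos hjm, hTx x ⟨j, hjm⟩]
  have hxnorm : ∀ x : EuclideanSpace ℝ (Fin (m+1)),
      ‖x‖^2 = ∑ j ∈ Finset.range (m+1), (ext m (fun i => x i) j)^2 := norm_sq_eq m
  have hsum_split : ∀ x : EuclideanSpace ℝ (Fin (m+1)),
      (Y x 0)^2 + ∑ i ∈ Finset.range m, (Y x (i+1) - Y x i)^2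
        = ∑ j ∈ Finset.range (m+1), (ext m (fun i => x i) j)^2 := by
    intro x
    rw [Finset.sum_range_succ' (fun j => (ext m (fun i => x i) j)^2) m]
    have h0 : Y x 0 = ext m (fun i => x i) 0 := by
      simp [hY, Finset.sum_range_one]
    have hstep : ∀ i, Y x (i+1) - Y x i = ext m (fun i => x i) (i+1) := by
      intro i
      rw [hY]
      simp only [Finset.sum_range_succ]
      ring
    rw [h0]
    rw [Finset.sum_congr rfl fun i _ => by rw [hstep i]]
    ring
  have hkey : ∀ x : EuclideanSpace ℝ (Fin (m+1)),
      ∑ j ∈ Finset.range (m+1), (ext m (fun i => x i) j)^2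
        - lam m * ∑ i ∈ Finset.range (m+1), (Y x i)^2
      = ∑ i ∈ Finset.range m,
          (v m (i+1) * Y x i - v m i * Y x (i+1))^2 / (v m i * v m (i+1)) := by
    intro x
    rw [← hsum_split x]
    exact key m (Y x)
  -- upper bound
  have hupper : ‖T‖ ≤ c := by
    apply ContinuousLinearMap.opNorm_le_bound _ hc_pos.le
    intro x
    have hnn : 0 ≤ ∑ i ∈ Finset.range m,
        (v m (i+1) * Y x i - v m i * Y x (i+1))^2 / (v m i * v m (i+1)) := by
      refine Finset.sum_nonneg fun i hi => div_nonneg (sq_nonneg _) ?_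
      have him := Finset.mem_range.mp hi
      exact (mul_pos (v_pos m (by omega)) (v_pos m (by omega))).le
    have h1 : lam m * ∑ i ∈ Finset.range (m+1), (Y x i)^2
        ≤ ∑ j ∈ Finset.range (m+1), (ext m (fun i => x i) j)^2 := by
      linarith [hkey x, hnn]
    have h2 : ‖T x‖^2 ≤ (c * ‖x‖)^2 := by
      rw [hTnorm x, mul_pow, hxnorm x]
      have h3 := mul_le_mul_of_nonneg_left h1 (sq_nonneg c)
      have h4 : c^2 * (lam m * ∑ i ∈ Finset.range (m+1), (Y x i)^2)
          = ∑ i ∈ Finset.range (m+1), (Y x i)^2 := by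
        rw [← mul_assoc, hc_sq, one_mul]
      linarith [h3, h4]
    nlinarith [norm_nonneg (T x), mul_nonneg hc_pos.le (norm_nonneg x), h2]
  -- lower bound
  have hlower : c ≤ ‖T‖ := by
    classical
    set w : ℕ → ℝ := fun i => Nat.casesOn i (v m 0) (fun j => v m (j+1) - v m j) with hw
    set x0 : EuclideanSpace ℝ (Fin (m+1)) :=
      (WithLp.equiv 2 ((Fin (m+1)) → ℝ)).symm (fun i : Fin (m+1) => w i) with hx0
    have hx0i : ∀ i : Fin (m+1), x0 i = w i := fun i => rfl
    have hext : ∀ j < m+1, ext m (fun i => x0 i) j = w j := by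
      intro j hj
      rw [show ext m (fun i => x0 i) j = x0 ⟨j, hj⟩ from dif_pos hj, hx0i]
    have hYv : ∀ k, k < m+1 → Y x0 k = v m k := by
      intro k
      induction k with
      | zero => intro _; simp [hY, Finset.sum_range_one, hext 0 (by omega), hw]
      | succ k ih =>
        intro hk
        have : Y x0 (k+1) = Y x0 k + ext m (fun i => x0 i) (k+1) := by
          rw [hY]; simp [Finset.sum_range_succ]
        rw [this, ih (by omega), hext (k+1) hk]
        simp [hw]
    have hkey0 := hkey x0
    have hrhs0 : ∑ i ∈ Finset.range m,
        (v m (i+1) * Y x0 i - v m i * Y x0 (i+1))^2 / (v m i * v m (i+1)) = 0 := by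
      refine Finset.sum_eq_zero fun i hi => ?_
      have him := Finset.mem_range.mp hi
      rw [hYv i (by omega), hYv (i+1) (by omega)]
      rw [show v m (i+1) * v m i - v m i * v m (i+1) = 0 by ring]
      simp
    have hTsum : ‖T x0‖^2 = ∑ i ∈ Finset.range (m+1), (v m i)^2 := by
      rw [hTnorm x0]
      exact Finset.sum_congr rfl fun i hi => by rw [hYv i (Finset.mem_range.mp hi)]
    have hxsum : ‖x0‖^2 = lam m * ∑ i ∈ Finset.range (m+1), (v m i)^2 := by
      have := hkey x0
      rw [hrhs0] at this
      have h2 : ∑ i ∈ Finset.range (m+1), (Y x0 i)^2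
          = ∑ i ∈ Finset.range (m+1), (v m i)^2 :=
        Finset.sum_congr rfl fun i hi => by rw [hYv i (Finset.mem_range.mp hi)]
      rw [hxnorm x0, ← h2]
      linarith [this]
    have hvsum_pos : 0 < ∑ i ∈ Finset.range (m+1), (v m i)^2 := by
      have h0 : (0:ℕ) ∈ Finset.range (m+1) := Finset.mem_range.mpr (by omega)
      have h1 : (v m 0)^2 ≤ ∑ i ∈ Finset.range (m+1), (v m i)^2 :=
        Finset.single_le_sum (f := fun i => (v m i)^2) (fun i _ => sq_nonneg _) h0
      have h2 : 0 < (v m 0)^2 := pow_pos (v_pos m (by omega)) 2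
      linarith
    have hx0_pos : 0 < ‖x0‖ := by
      have h3 : 0 < ‖x0‖^2 := by rw [hxsum]; exact mul_pos hlam_pos hvsum_pos
      nlinarith [norm_nonneg x0, h3]
    have hTx0 : ‖T x0‖ = c * ‖x0‖ := by
      have h1 : ‖T x0‖^2 = (c * ‖x0‖)^2 := by
        rw [hTsum, mul_pow, hxsum, ← mul_assoc, hc_sq, one_mul]
      nlinarith [norm_nonneg (T x0), mul_nonneg hc_pos.le (norm_nonneg x0), h1]
    have := ContinuousLinearMap.ratio_le_opNorm T x0
    rw [hTx0, mul_div_assoc, div_self hx0_pos.ne', mul_one] at this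
    exact this
  have heq : ‖T‖ = c := le_antisymm hupper hlower
  constructor
  · rw [heq, hc, hθ]
  · rw [heq, hc]
    have hA : (0:ℝ) < 2 * ((m:ℝ)+1) + 1 := by positivity
    have h1 := jordan m
    have h2 := mul_le_mul_of_nonneg_left h1 hA.le
    have h3 : (2*((m:ℝ)+1)+1) * (1/(2*((m:ℝ)+1)+1)) = 1 := mul_one_div_cancel hA.ne'
    rw [div_le_iff₀ (by linarith [hsθ] : (0:ℝ) < 2 * Real.sin (phi m / 2))]
    push_cast
    nlinarith [h2, h3]
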